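/- Fix integers s ≥ 1, r ≥ 3 and 1 ≤ p ≤ q with r = p+q ≤ s. Let g(s, r−1, p, q) denote the maximum number of hyperedges of an (r−1)-graph on s vertices whose 2-shadow contains no copy of K_{p,q}. Then there exist a constant K and n₀ such that for all n ≥ n₀, | ex_r(n, BM_{s+1} ∪ BK_{p,q}) − min{p−1, g(s, r−1, p, q)}·n | ≤ K. -/

import Mathlib

open Finset

/-- `H` is an `r`-uniform hypergraph (an `r`-graph): every hyperedge has exactly `r` vertices. -/
def IsUniform {V : Type*} (r : ℕ) (H : Finset (Finset V)) : Prop :=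
  ∀ e ∈ H, e.card = r

/-- `H` contains a Berge copy of the graph with edge set `F`: there are an injection `g`
of the vertices of `F` into the vertices of `H` and an injection `φ` of the edges of `F`
into the hyperedges of `H` such that `g '' e ⊆ φ e` for every edge `e` of `F`. -/
def ContainsBerge {α V : Type*} [DecidableEq α] [DecidableEq V]
    (F : Finset (Finset α)) (H : Finset (Finset V)) : Prop :=
  ∃ (g : α → V) (φ : Finset α → Finset V),
    Function.Injective g ∧ Set.InjOn φ ↑F ∧
      (∀ e ∈ F, φ e ∈ H) ∧ ∀ e ∈ F, e.image g ⊆ φ e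

/-- `H` contains a copy (a subhypergraph isomorphic to) of the hypergraph with
vertex set `A` and edge set `F`. -/
def ContainsCopy {α V : Type*} [DecidableEq α] [DecidableEq V]
    (A : Finset α) (F : Finset (Finset α)) (H : Finset (Finset V)) : Prop :=
  ∃ g : α → V, Set.InjOn g ↑A ∧ ∀ e ∈ F, e.image g ∈ H

/-- The edge set of the matching `M_t` consisting of `t` pairwise disjoint edges. -/
def matchingHG (t : ℕ) : Finset (Finset (Fin t × Fin 2)) :=
  Finset.univ.image fun i : Fin t => ({(i, 0), (i, 1)} : Finset (Fin t × Fin 2))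

/-- The Turán number: the maximum number of hyperedges in an `r`-graph on `n` vertices
satisfying the freeness predicate `Free`. -/
noncomputable def exr (n r : ℕ) (Free : Finset (Finset (Fin n)) → Prop) : ℕ :=
  sSup {m | ∃ H : Finset (Finset (Fin n)), IsUniform r H ∧ Free H ∧ H.card = m}

/-- The edge set of the complete bipartite graph `K_{p,q}`. -/
def completeBipartite (p q : ℕ) : Finset (Finset (Fin p ⊕ Fin q)) :=
  (Finset.univ ×ˢ Finset.univ).image
    fun x : Fin p × Fin q => ({Sum.inl x.1, Sum.inr x.2} : Finset (Fin p ⊕ Fin q))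

/-- The `2`-shadow of a hypergraph: the graph whose edges are the `2`-element sets
contained in some hyperedge. -/
def twoShadow {V : Type*} [Fintype V] [DecidableEq V]
    (H : Finset (Finset V)) : Finset (Finset V) :=
  ((Finset.univ : Finset V).powersetCard 2).filter fun e => ∃ f ∈ H, e ⊆ f

set_option linter.unusedSectionVars false
set_option linter.unnecessarySimpa false

lemma mem_matchingHG {t : ℕ} {e : Finset (Fin t × Fin 2)} :
    e ∈ matchingHG t ↔ ∃ i, e = {(i, 0), (i, 1)} := by
  simp [matchingHG, eq_comm]

lemma mem_completeBipartite {p q : ℕ} {e : Finset (Fin p ⊕ Fin q)} :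
    e ∈ completeBipartite p q ↔ ∃ i j, e = {Sum.inl i, Sum.inr j} := by
  simp [completeBipartite, eq_comm]

lemma fst_mem_matching_edge {t : ℕ} {i j : Fin t}
    (h : ((j, (0 : Fin 2)) : Fin t × Fin 2) ∈ ({(i, 0), (i, 1)} : Finset (Fin t × Fin 2))) :
    j = i := by
  rcases Finset.mem_insert.1 h with h' | h'
  · exact congrArg Prod.fst h'
  · have := congrArg Prod.snd (Finset.mem_singleton.1 h')
    simp at this

lemma matching_edge_inj {t : ℕ} {i j : Fin t}
    (h : ({(i, 0), (i, 1)} : Finset (Fin t × Fin 2)) = {(j, 0), (j, 1)}) : i = j := by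
  apply fst_mem_matching_edge (i := j) (j := i)
  rw [← h]; simp

lemma cb_edge_inj {p q : ℕ} {i i' : Fin p} {j j' : Fin q}
    (h : ({Sum.inl i, Sum.inr j} : Finset (Fin p ⊕ Fin q)) = {Sum.inl i', Sum.inr j'}) :
    i = i' ∧ j = j' := by
  constructor
  · have : (Sum.inl i : Fin p ⊕ Fin q) ∈ ({Sum.inl i', Sum.inr j'} : Finset (Fin p ⊕ Fin q)) := by
      rw [← h]; simp
    simpa using this
  · have : (Sum.inr j : Fin p ⊕ Fin q) ∈ ({Sum.inl i', Sum.inr j'} : Finset (Fin p ⊕ Fin q)) := by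
      rw [← h]; simp
    simpa using this

section
variable {V : Type*} [DecidableEq V]

lemma berge_matching_intro {t : ℕ} {H : Finset (Finset V)}
    (h : Fin t → Finset V) (c : Fin t × Fin 2 → V)
    (hinj : Function.Injective h) (cinj : Function.Injective c)
    (hH : ∀ i, h i ∈ H) (hc : ∀ i k, c (i, k) ∈ h i) :
    ContainsBerge (matchingHG t) H := by
  classical
  set φ : Finset (Fin t × Fin 2) → Finset V :=
    fun e => if he : ∃ i : Fin t, ((i, (0 : Fin 2)) ∈ e) then h he.choose else ∅ with hφ
  have key : ∀ i : Fin t, φ ({(i, 0), (i, 1)} : Finset (Fin t × Fin 2)) = h i := by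
    intro i
    have he : ∃ j : Fin t, ((j, (0 : Fin 2)) ∈ ({(i, 0), (i, 1)} : Finset (Fin t × Fin 2))) :=
      ⟨i, by simp⟩
    rw [hφ]
    simp only [dif_pos he]
    congr 1
    exact fst_mem_matching_edge he.choose_spec
  refine ⟨c, φ, cinj, ?_, ?_, ?_⟩
  · intro e he e' he' hee
    obtain ⟨i, rfl⟩ := mem_matchingHG.1 (Finset.mem_coe.1 he)
    obtain ⟨j, rfl⟩ := mem_matchingHG.1 (Finset.mem_coe.1 he')
    rw [key, key] at hee
    rw [hinj hee]
  · intro e he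
    obtain ⟨i, rfl⟩ := mem_matchingHG.1 he
    rw [key]; exact hH i
  · intro e he
    obtain ⟨i, rfl⟩ := mem_matchingHG.1 he
    rw [key]
    intro x hx
    simp only [Finset.mem_image] at hx
    obtain ⟨a, ha, rfl⟩ := hx
    rcases Finset.mem_insert.1 ha with rfl | ha
    · exact hc i 0
    · rw [Finset.mem_singleton.1 ha]; exact hc i 1

lemma berge_matching_elim {t : ℕ} {H : Finset (Finset V)}
    (hcb : ContainsBerge (matchingHG t) H) :
    ∃ (h : Fin t → Finset V) (c : Fin t × Fin 2 → V),
      Function.Injective h ∧ Function.Injective c ∧ (∀ i, h i ∈ H) ∧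
        ∀ i k, c (i, k) ∈ h i := by
  obtain ⟨g, φ, ginj, φinj, φH, hsub⟩ := hcb
  have hm : ∀ i : Fin t, ({(i, 0), (i, 1)} : Finset (Fin t × Fin 2)) ∈ matchingHG t :=
    fun i => mem_matchingHG.2 ⟨i, rfl⟩
  refine ⟨fun i => φ {(i, 0), (i, 1)}, g, ?_, ginj, fun i => φH _ (hm i), ?_⟩
  · intro i j hij
    exact matching_edge_inj (φinj (Finset.mem_coe.2 (hm i)) (Finset.mem_coe.2 (hm j)) hij)
  · intro i k
    apply hsub _ (hm i)
    apply Finset.mem_image_of_mem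
    fin_cases k <;> simp

lemma berge_cb_intro {p q : ℕ} {H : Finset (Finset V)}
    (x : Fin p → V) (y : Fin q → V) (T : Fin p → Fin q → Finset V)
    (hxy : Function.Injective (Sum.elim x y))
    (hT : ∀ i j i' j', T i j = T i' j' → i = i' ∧ j = j')
    (hTH : ∀ i j, T i j ∈ H) (hxT : ∀ i j, x i ∈ T i j) (hyT : ∀ i j, y j ∈ T i j) :
    ContainsBerge (completeBipartite p q) H := by
  classical
  set φ : Finset (Fin p ⊕ Fin q) → Finset V :=
    fun e =>
      if he : (∃ i : Fin p, Sum.inl i ∈ e) ∧ (∃ j : Fin q, Sum.inr j ∈ e) then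
        T he.1.choose he.2.choose
      else ∅ with hφ
  have key : ∀ (i : Fin p) (j : Fin q),
      φ ({Sum.inl i, Sum.inr j} : Finset (Fin p ⊕ Fin q)) = T i j := by
    intro i j
    have he : (∃ i' : Fin p, Sum.inl i' ∈ ({Sum.inl i, Sum.inr j} : Finset (Fin p ⊕ Fin q))) ∧
        (∃ j' : Fin q, Sum.inr j' ∈ ({Sum.inl i, Sum.inr j} : Finset (Fin p ⊕ Fin q))) :=
      ⟨⟨i, by simp⟩, ⟨j, by simp⟩⟩
    rw [hφ]
    simp only [dif_pos he]
    have h1 : he.1.choose = i := by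
      have := he.1.choose_spec
      simpa using this
    have h2 : he.2.choose = j := by
      have := he.2.choose_spec
      simpa using this
    rw [h1, h2]
  refine ⟨Sum.elim x y, φ, hxy, ?_, ?_, ?_⟩
  · intro e he e' he' hee
    obtain ⟨i, j, rfl⟩ := mem_completeBipartite.1 (Finset.mem_coe.1 he)
    obtain ⟨i', j', rfl⟩ := mem_completeBipartite.1 (Finset.mem_coe.1 he')
    rw [key, key] at hee
    obtain ⟨rfl, rfl⟩ := hT _ _ _ _ hee
    rfl
  · intro e he
    obtain ⟨i, j, rfl⟩ := mem_completeBipartite.1 he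
    rw [key]; exact hTH i j
  · intro e he
    obtain ⟨i, j, rfl⟩ := mem_completeBipartite.1 he
    rw [key]
    intro z hz
    simp only [Finset.mem_image] at hz
    obtain ⟨a, ha, rfl⟩ := hz
    rcases Finset.mem_insert.1 ha with rfl | ha
    · exact hxT i j
    · rw [Finset.mem_singleton.1 ha]; exact hyT i j

lemma berge_cb_elim {p q : ℕ} {H : Finset (Finset V)}
    (hcb : ContainsBerge (completeBipartite p q) H) :
    ∃ (x : Fin p → V) (y : Fin q → V) (T : Fin p → Fin q → Finset V),
      Function.Injective (Sum.elim x y) ∧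
        (∀ i j i' j', T i j = T i' j' → i = i' ∧ j = j') ∧
        (∀ i j, T i j ∈ H) ∧ (∀ i j, x i ∈ T i j) ∧ ∀ i j, y j ∈ T i j := by
  obtain ⟨g, φ, ginj, φinj, φH, hsub⟩ := hcb
  have hm : ∀ (i : Fin p) (j : Fin q),
      ({Sum.inl i, Sum.inr j} : Finset (Fin p ⊕ Fin q)) ∈ completeBipartite p q :=
    fun i j => mem_completeBipartite.2 ⟨i, j, rfl⟩
  refine ⟨fun i => g (Sum.inl i), fun j => g (Sum.inr j),
    fun i j => φ {Sum.inl i, Sum.inr j}, ?_, ?_, fun i j => φH _ (hm i j), ?_, ?_⟩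
  · have : (Sum.elim (fun i => g (Sum.inl i)) fun j => g (Sum.inr j)) = g := by
      funext a; cases a <;> rfl
    rw [this]; exact ginj
  · intro i j i' j' hee
    exact cb_edge_inj (φinj (Finset.mem_coe.2 (hm i j)) (Finset.mem_coe.2 (hm i' j')) hee)
  · intro i j
    exact hsub _ (hm i j) (Finset.mem_image_of_mem g (by simp))
  · intro i j
    exact hsub _ (hm i j) (Finset.mem_image_of_mem g (by simp))
end

lemma isUniform_empty {V : Type*} (r : ℕ) : IsUniform r (∅ : Finset (Finset V)) := by
  intro e he; exact absurd he (Finset.notMem_empty e)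

lemma exr_le {n r : ℕ} {P : Finset (Finset (Fin n)) → Prop} {K : ℕ}
    (h0 : P ∅) (h : ∀ H, IsUniform r H → P H → H.card ≤ K) : exr n r P ≤ K := by
  unfold exr
  refine csSup_le (Set.nonempty_of_mem (⟨∅, isUniform_empty r, h0, rfl⟩ :
    (0 : ℕ) ∈ {m | ∃ H : Finset (Finset (Fin n)), IsUniform r H ∧ P H ∧ H.card = m})) ?_
  rintro m ⟨H, hu, hp, rfl⟩
  exact h H hu hp

lemma exr_ge {n r : ℕ} {P : Finset (Finset (Fin n)) → Prop}
    (H : Finset (Finset (Fin n))) (hu : IsUniform r H) (hp : P H) : H.card ≤ exr n r P := by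
  unfold exr
  refine le_csSup ⟨2 ^ n, ?_⟩ ⟨H, hu, hp, rfl⟩
  rintro m ⟨G, _, _, rfl⟩
  calc G.card ≤ (Finset.univ : Finset (Finset (Fin n))).card := Finset.card_le_univ G
    _ = 2 ^ n := by simp [Fintype.card_finset]

lemma exr_attained {n r : ℕ} {P : Finset (Finset (Fin n)) → Prop} (h0 : P ∅) :
    ∃ H : Finset (Finset (Fin n)), IsUniform r H ∧ P H ∧ H.card = exr n r P := by
  have hne : {m | ∃ H : Finset (Finset (Fin n)), IsUniform r H ∧ P H ∧ H.card = m}.Nonempty :=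
    ⟨0, ∅, isUniform_empty r, h0, rfl⟩
  have hfin : {m | ∃ H : Finset (Finset (Fin n)), IsUniform r H ∧ P H ∧ H.card = m}.Finite := by
    apply Set.Finite.subset (Set.finite_Iic (2 ^ n))
    rintro m ⟨G, _, _, rfl⟩
    calc G.card ≤ (Finset.univ : Finset (Finset (Fin n))).card := Finset.card_le_univ G
      _ = 2 ^ n := by simp [Fintype.card_finset]
  unfold exr
  exact hne.csSup_mem hfin

section
variable {V : Type*} [Fintype V] [DecidableEq V]

lemma mem_twoShadow {L : Finset (Finset V)} {e : Finset V} :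
    e ∈ twoShadow L ↔ e.card = 2 ∧ ∃ f ∈ L, e ⊆ f := by
  simp only [twoShadow, Finset.mem_filter, Finset.mem_powersetCard, Finset.subset_univ,
    true_and]

lemma not_containsBerge_empty {α : Type*} [DecidableEq α] {F : Finset (Finset α)}
    (hne : F.Nonempty) : ¬ ContainsBerge F (∅ : Finset (Finset V)) := by
  rintro ⟨g, φ, -, -, hH, -⟩
  obtain ⟨e, he⟩ := hne
  exact absurd (hH e he) (Finset.notMem_empty _)

lemma matchingHG_nonempty {t : ℕ} (ht : 1 ≤ t) : (matchingHG t).Nonempty := by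
  refine ⟨{(⟨0, ht⟩, 0), (⟨0, ht⟩, 1)}, ?_⟩
  exact Finset.mem_image_of_mem _ (Finset.mem_univ _)

lemma completeBipartite_nonempty {p q : ℕ} (hp : 1 ≤ p) (hq : 1 ≤ q) :
    (completeBipartite p q).Nonempty := by
  have h : ((⟨0, hp⟩ : Fin p), (⟨0, hq⟩ : Fin q)) ∈ Finset.univ ×ˢ Finset.univ :=
    Finset.mem_product.2 ⟨Finset.mem_univ _, Finset.mem_univ _⟩
  exact ⟨_, Finset.mem_image_of_mem _ h⟩

lemma not_containsCopy_cb_empty {p q : ℕ} (hp : 1 ≤ p) (hq : 1 ≤ q) :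
    ¬ ContainsCopy Finset.univ (completeBipartite p q)
        (twoShadow (∅ : Finset (Finset V))) := by
  rintro ⟨g, -, hE⟩
  obtain ⟨e, he⟩ := completeBipartite_nonempty hp hq
  have := hE e he
  rw [mem_twoShadow] at this
  obtain ⟨-, f, hf, -⟩ := this
  exact absurd hf (Finset.notMem_empty _)

lemma copy_cb_shadow_elim {p q : ℕ} {L : Finset (Finset V)}
    (h : ContainsCopy Finset.univ (completeBipartite p q) (twoShadow L)) :
    ∃ (z : Fin p → V) (w : Fin q → V),
      Function.Injective (Sum.elim z w) ∧ ∀ i j, ∃ f ∈ L, z i ∈ f ∧ w j ∈ f := by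
  obtain ⟨g, ginj, hE⟩ := h
  refine ⟨fun i => g (Sum.inl i), fun j => g (Sum.inr j), ?_, ?_⟩
  · have : (Sum.elim (fun i => g (Sum.inl i)) fun j => g (Sum.inr j)) = g := by
      funext a; cases a <;> rfl
    rw [this]
    intro a b hab
    exact ginj (Finset.mem_coe.2 (Finset.mem_univ a)) (Finset.mem_coe.2 (Finset.mem_univ b)) hab
  · intro i j
    have he : ({Sum.inl i, Sum.inr j} : Finset (Fin p ⊕ Fin q)) ∈ completeBipartite p q :=
      mem_completeBipartite.2 ⟨i, j, rfl⟩
    have := hE _ he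
    rw [mem_twoShadow] at this
    obtain ⟨-, f, hf, hsub⟩ := this
    refine ⟨f, hf, ?_, ?_⟩
    · exact hsub (Finset.mem_image_of_mem g (by simp))
    · exact hsub (Finset.mem_image_of_mem g (by simp))

lemma copy_cb_shadow_intro {p q : ℕ} {L : Finset (Finset V)}
    (z : Fin p → V) (w : Fin q → V)
    (hinj : Function.Injective (Sum.elim z w))
    (hf : ∀ i j, ∃ f ∈ L, z i ∈ f ∧ w j ∈ f) :
    ContainsCopy Finset.univ (completeBipartite p q) (twoShadow L) := by
  refine ⟨Sum.elim z w, fun a _ b _ hab => hinj hab, ?_⟩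
  intro e he
  obtain ⟨i, j, rfl⟩ := mem_completeBipartite.1 he
  obtain ⟨f, hfL, hzf, hwf⟩ := hf i j
  have hzw : z i ≠ w j := fun h => by
    have : Sum.inl i = Sum.inr j := hinj (a₁ := Sum.inl i) (a₂ := Sum.inr j) h
    exact Sum.inl_ne_inr this
  have himg : ({Sum.inl i, Sum.inr j} : Finset (Fin p ⊕ Fin q)).image (Sum.elim z w) =
      {z i, w j} := by
    simp [Finset.image_insert]
  rw [himg, mem_twoShadow]
  refine ⟨?_, f, hfL, ?_⟩
  · rw [Finset.card_insert_of_notMem (by simp [hzw]), Finset.card_singleton]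
  · intro x hx
    rcases Finset.mem_insert.1 hx with rfl | hx
    · exact hzf
    · rw [Finset.mem_singleton.1 hx]; exact hwf
end

lemma exists_sdr {V : Type*} [DecidableEq V] {p : ℕ} (F : Fin p → Finset V)
    (h : ∀ i, p ≤ (F i).card) :
    ∃ x : Fin p → V, Function.Injective x ∧ ∀ i, x i ∈ F i := by
  suffices H : ∀ k (hk : k ≤ p), ∃ x : Fin k → V, Function.Injective x ∧
      ∀ j : Fin k, x j ∈ F (Fin.castLE hk j) by
    obtain ⟨x, hinj, hmem⟩ := H p le_rfl
    exact ⟨x, hinj, fun i => by simpa using hmem i⟩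
  intro k
  induction k with
  | zero => exact fun _ => ⟨Fin.elim0, fun a => a.elim0, fun j => j.elim0⟩
  | succ k ih =>
    intro hk
    obtain ⟨x, hinj, hmem⟩ := ih (Nat.le_of_succ_le hk)
    have hcard : ((Finset.univ : Finset (Fin k)).image x).card < (F ⟨k, hk⟩).card := by
      calc ((Finset.univ : Finset (Fin k)).image x).card
          ≤ (Finset.univ : Finset (Fin k)).card := Finset.card_image_le
        _ = k := by simp
        _ < p := hk
        _ ≤ (F ⟨k, hk⟩).card := h _
    have hns : ¬ F ⟨k, hk⟩ ⊆ (Finset.univ : Finset (Fin k)).image x := fun hsub =>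
      absurd (Finset.card_le_card hsub) (not_le.2 hcard)
    obtain ⟨a, haF, hanotin⟩ := Finset.not_subset.1 hns
    refine ⟨Fin.snoc x a, ?_, ?_⟩
    · intro j1 j2 hj
      induction j1 using Fin.lastCases with
      | last =>
        induction j2 using Fin.lastCases with
        | last => rfl
        | cast j2 =>
          rw [Fin.snoc_last, Fin.snoc_castSucc] at hj
          exact absurd (hj ▸ Finset.mem_image_of_mem x (Finset.mem_univ j2)) hanotin
      | cast j1 =>
        induction j2 using Fin.lastCases with
        | last =>
          rw [Fin.snoc_last, Fin.snoc_castSucc] at hj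
          exact absurd (hj ▸ Finset.mem_image_of_mem x (Finset.mem_univ j1)) hanotin
        | cast j2 =>
          rw [Fin.snoc_castSucc, Fin.snoc_castSucc] at hj
          rw [hinj hj]
    · intro j
      induction j using Fin.lastCases with
      | last =>
        rw [Fin.snoc_last]
        convert haF using 2
        exact Fin.ext rfl
      | cast j =>
        rw [Fin.snoc_castSucc]
        have := hmem j
        convert this using 2
        exact Fin.ext rfl

lemma pair_fun_injective {V : Type*} {k : ℕ} (a b : Fin k → V)
    (ha : Function.Injective a) (hb : Function.Injective b) (hab : ∀ i j, a i ≠ b j) :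
    Function.Injective (fun x : Fin k × Fin 2 => if x.2 = 0 then a x.1 else b x.1) := by
  rintro ⟨i, ki⟩ ⟨j, kj⟩ hij
  simp only at hij
  fin_cases ki <;> fin_cases kj <;> simp only [if_pos rfl, if_neg (by decide : ¬(1 : Fin 2) = 0)] at hij
  · rw [ha hij]
  · exact absurd hij (hab i j)
  · exact absurd hij.symm (hab j i)
  · rw [hb hij]

lemma greedy_big_vertices {V : Type*} [Fintype V] [DecidableEq V] {H : Finset (Finset V)}
    {t : ℕ} (u : Fin t → V) (uinj : Function.Injective u)
    (hdeg : ∀ i, t + 2 ^ (2 * t) ≤ (H.filter (fun e => u i ∈ e)).card) :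
    ContainsBerge (matchingHG t) H := by
  classical
  suffices P : ∀ k (hk : k ≤ t), ∃ (h : Fin k → Finset V) (w : Fin k → V),
      (∀ j, h j ∈ H) ∧ (∀ j, u (Fin.castLE hk j) ∈ h j) ∧ (∀ j, w j ∈ h j) ∧
        Function.Injective h ∧ Function.Injective w ∧ ∀ j j', w j ≠ u j' by
    obtain ⟨h, w, hH, huh, hwh, hinj, winj, hwu⟩ := P t le_rfl
    refine berge_matching_intro h
      (fun x : Fin t × Fin 2 => if x.2 = 0 then u x.1 else w x.1) hinj
      (pair_fun_injective u w uinj winj (fun i j hij => hwu j i hij.symm)) hH ?_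
    · intro i k
      by_cases hk0 : k = 0
      · subst hk0
        show (if (0 : Fin 2) = 0 then u i else w i) ∈ h i
        rw [if_pos rfl]
        have := huh i
        convert this using 2
        exact Fin.ext rfl
      · show (if k = 0 then u i else w i) ∈ h i
        rw [if_neg hk0]
        exact hwh i
  intro k
  induction k with
  | zero => exact fun _ => ⟨Fin.elim0, Fin.elim0, fun j => j.elim0, fun j => j.elim0,
      fun j => j.elim0, fun a => a.elim0, fun a => a.elim0, fun j => j.elim0⟩
  | succ k ih =>
    intro hk
    obtain ⟨h, w, hH, huh, hwh, hinj, winj, hwu⟩ := ih (Nat.le_of_succ_le hk)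
    set F : Finset V := (Finset.univ.image u) ∪ (Finset.univ.image w) with hF
    have hFcard : F.card ≤ 2 * t := by
      calc F.card ≤ (Finset.univ.image u).card + (Finset.univ.image w).card :=
            Finset.card_union_le _ _
        _ ≤ t + k := by
            gcongr <;> · exact Finset.card_image_le.trans (le_of_eq (by simp))
        _ ≤ 2 * t := by omega
    set cand := H.filter (fun e => u (Fin.castLE hk (Fin.last k)) ∈ e) with hcand
    set bad := cand.filter (fun e => e ∈ Finset.univ.image h ∨ e ⊆ F) with hbad
    have hbadcard : bad.card ≤ k + 2 ^ (2 * t) := by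
      calc bad.card ≤ (cand.filter (fun e => e ∈ Finset.univ.image h)).card +
            (cand.filter (fun e => e ⊆ F)).card := by
            rw [hbad, Finset.filter_or]
            exact Finset.card_union_le _ _
        _ ≤ k + 2 ^ (2 * t) := by
            gcongr
            · calc (cand.filter (fun e => e ∈ Finset.univ.image h)).card
                  ≤ (Finset.univ.image h).card := Finset.card_le_card (by
                    intro e he; exact (Finset.mem_filter.1 he).2)
                _ ≤ k := Finset.card_image_le.trans (le_of_eq (by simp))
            · calc (cand.filter (fun e => e ⊆ F)).card ≤ F.powerset.card :=
                  Finset.card_le_card (by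
                    intro e he
                    exact Finset.mem_powerset.2 (Finset.mem_filter.1 he).2)
                _ = 2 ^ F.card := Finset.card_powerset F
                _ ≤ 2 ^ (2 * t) := Nat.pow_le_pow_right (by norm_num) hFcard
    have hlt : bad.card < cand.card := by
      calc bad.card ≤ k + 2 ^ (2 * t) := hbadcard
        _ < t + 2 ^ (2 * t) := by omega
        _ ≤ cand.card := hdeg _
    have hnsub : ¬ cand ⊆ bad := fun hsub => absurd (Finset.card_le_card hsub) (not_le.2 hlt)
    obtain ⟨e, hecand, hebad⟩ := Finset.not_subset.1 hnsub
    have heH : e ∈ H := (Finset.mem_filter.1 hecand).1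
    have heu : u (Fin.castLE hk (Fin.last k)) ∈ e := (Finset.mem_filter.1 hecand).2
    have hnot : ¬ (e ∈ Finset.univ.image h ∨ e ⊆ F) := fun hc =>
      hebad (Finset.mem_filter.2 ⟨hecand, hc⟩)
    push_neg at hnot
    obtain ⟨henew, hesub⟩ := hnot
    obtain ⟨wk, hwke, hwkF⟩ := Finset.not_subset.1 hesub
    have hwknotu : ∀ j, wk ≠ u j := fun j hj =>
      hwkF (hF ▸ Finset.mem_union_left _ (hj ▸ Finset.mem_image_of_mem u (Finset.mem_univ j)))
    have hwknotw : ∀ j, wk ≠ w j := fun j hj =>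
      hwkF (hF ▸ Finset.mem_union_right _ (hj ▸ Finset.mem_image_of_mem w (Finset.mem_univ j)))
    refine ⟨Fin.snoc h e, Fin.snoc w wk, ?_, ?_, ?_, ?_, ?_, ?_⟩
    · intro j
      induction j using Fin.lastCases with
      | last => rw [Fin.snoc_last]; exact heH
      | cast j => rw [Fin.snoc_castSucc]; exact hH j
    · intro j
      induction j using Fin.lastCases with
      | last => rw [Fin.snoc_last]; exact heu
      | cast j => rw [Fin.snoc_castSucc]; have := huh j; convert this using 2; exact Fin.ext rfl
    · intro j
      induction j using Fin.lastCases with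
      | last => simp only [Fin.snoc_last]; exact hwke
      | cast j => simp only [Fin.snoc_castSucc]; exact hwh j
    · intro j1 j2 hj
      induction j1 using Fin.lastCases with
      | last =>
        induction j2 using Fin.lastCases with
        | last => rfl
        | cast j2 =>
          rw [Fin.snoc_last, Fin.snoc_castSucc] at hj
          exact absurd (Finset.mem_image_of_mem h (Finset.mem_univ j2)) (hj ▸ henew)
      | cast j1 =>
        induction j2 using Fin.lastCases with
        | last =>
          rw [Fin.snoc_last, Fin.snoc_castSucc] at hj
          exact absurd (Finset.mem_image_of_mem h (Finset.mem_univ j1)) (hj.symm ▸ henew)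
        | cast j2 =>
          rw [Fin.snoc_castSucc, Fin.snoc_castSucc] at hj
          rw [hinj hj]
    · intro j1 j2 hj
      induction j1 using Fin.lastCases with
      | last =>
        induction j2 using Fin.lastCases with
        | last => rfl
        | cast j2 =>
          rw [Fin.snoc_last, Fin.snoc_castSucc] at hj
          exact absurd hj (hwknotw j2)
      | cast j1 =>
        induction j2 using Fin.lastCases with
        | last =>
          rw [Fin.snoc_last, Fin.snoc_castSucc] at hj
          exact absurd hj.symm (hwknotw j1)
        | cast j2 =>
          rw [Fin.snoc_castSucc, Fin.snoc_castSucc] at hj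
          rw [winj hj]
    · intro j j'
      induction j using Fin.lastCases with
      | last => rw [Fin.snoc_last]; exact hwknotu _
      | cast j => rw [Fin.snoc_castSucc]; exact hwu j _

lemma greedy_pair_edges {V : Type*} [Fintype V] [DecidableEq V] {H E2 : Finset (Finset V)}
    {B : Finset V} {t D : ℕ} (hE2H : E2 ⊆ H)
    (hpair : ∀ e ∈ E2, 2 ≤ (e \ B).card)
    (hdeg : ∀ v, v ∉ B → (H.filter (fun e => v ∈ e)).card ≤ D)
    (hcard : t * (2 * D) < E2.card) :
    ContainsBerge (matchingHG t) H := by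
  classical
  suffices P : ∀ k (hk : k ≤ t), ∃ (h : Fin k → Finset V) (a b : Fin k → V),
      (∀ j, h j ∈ E2) ∧ (∀ j, a j ∈ h j) ∧ (∀ j, b j ∈ h j) ∧
        (∀ j, a j ∉ B) ∧ (∀ j, b j ∉ B) ∧ Function.Injective h ∧
        Function.Injective a ∧ Function.Injective b ∧ ∀ j j', a j ≠ b j' by
    obtain ⟨h, a, b, hE, hah, hbh, -, -, hinj, ainj, binj, hab⟩ := P t le_rfl
    refine berge_matching_intro h
      (fun x : Fin t × Fin 2 => if x.2 = 0 then a x.1 else b x.1) hinj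
      (pair_fun_injective a b ainj binj hab) (fun j => hE2H (hE j)) ?_
    intro i k
    by_cases hk0 : k = 0
    · subst hk0
      show (if (0 : Fin 2) = 0 then a i else b i) ∈ h i
      rw [if_pos rfl]; exact hah i
    · show (if k = 0 then a i else b i) ∈ h i
      rw [if_neg hk0]; exact hbh i
  intro k
  induction k with
  | zero => exact fun _ => ⟨Fin.elim0, Fin.elim0, Fin.elim0, fun j => j.elim0, fun j => j.elim0,
      fun j => j.elim0, fun j => j.elim0, fun j => j.elim0, fun x => x.elim0, fun x => x.elim0,
      fun x => x.elim0, fun j => j.elim0⟩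
  | succ k ih =>
    intro hk
    obtain ⟨h, a, b, hE, hah, hbh, haB, hbB, hinj, ainj, binj, hab⟩ := ih (Nat.le_of_succ_le hk)
    set P : Finset V := (Finset.univ.image a) ∪ (Finset.univ.image b) with hP
    have hPB : ∀ v ∈ P, v ∉ B := by
      intro v hv
      rw [hP, Finset.mem_union] at hv
      rcases hv with hv | hv
      · obtain ⟨j, -, rfl⟩ := Finset.mem_image.1 hv
        exact haB j
      · obtain ⟨j, -, rfl⟩ := Finset.mem_image.1 hv
        exact hbB j
    have hPcard : P.card ≤ 2 * k := by
      calc P.card ≤ (Finset.univ.image a).card + (Finset.univ.image b).card :=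
            Finset.card_union_le _ _
        _ ≤ k + k := by gcongr <;> · exact Finset.card_image_le.trans (le_of_eq (by simp))
        _ = 2 * k := by omega
    set bad := E2.filter (fun e => ∃ v ∈ P, v ∈ e) with hbad
    have hbadcard : bad.card ≤ (2 * k) * D := by
      calc bad.card ≤ (P.biUnion (fun v => H.filter (fun e => v ∈ e))).card := by
            apply Finset.card_le_card
            intro e he
            rw [hbad, Finset.mem_filter] at he
            obtain ⟨v, hvP, hve⟩ := he.2
            exact Finset.mem_biUnion.2 ⟨v, hvP, Finset.mem_filter.2 ⟨hE2H he.1, hve⟩⟩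
        _ ≤ ∑ v ∈ P, (H.filter (fun e => v ∈ e)).card := Finset.card_biUnion_le
        _ ≤ ∑ _v ∈ P, D := Finset.sum_le_sum (fun v hv => hdeg v (hPB v hv))
        _ = P.card * D := by rw [Finset.sum_const, smul_eq_mul]
        _ ≤ (2 * k) * D := by gcongr
    have hlt : bad.card < E2.card := by
      calc bad.card ≤ (2 * k) * D := hbadcard
        _ ≤ t * (2 * D) := by ring_nf; nlinarith [Nat.le_of_succ_le hk]
        _ < E2.card := hcard
    have hnsub : ¬ E2 ⊆ bad := fun hsub => absurd (Finset.card_le_card hsub) (not_le.2 hlt)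
    obtain ⟨e, heE2, hebad⟩ := Finset.not_subset.1 hnsub
    have hnot : ∀ v ∈ P, v ∉ e := by
      intro v hvP hve
      exact hebad (Finset.mem_filter.2 ⟨heE2, v, hvP, hve⟩)
    obtain ⟨a', ha', b', hb', hane⟩ := Finset.one_lt_card.1 (hpair e heE2)
    have ha'e : a' ∈ e := (Finset.mem_sdiff.1 ha').1
    have hb'e : b' ∈ e := (Finset.mem_sdiff.1 hb').1
    have ha'B : a' ∉ B := (Finset.mem_sdiff.1 ha').2
    have hb'B : b' ∉ B := (Finset.mem_sdiff.1 hb').2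
    have ha'P : a' ∉ P := fun hc => hnot a' hc ha'e
    have hb'P : b' ∉ P := fun hc => hnot b' hc hb'e
    have haP : ∀ j, a j ∈ P := fun j =>
      hP ▸ Finset.mem_union_left _ (Finset.mem_image_of_mem a (Finset.mem_univ j))
    have hbP : ∀ j, b j ∈ P := fun j =>
      hP ▸ Finset.mem_union_right _ (Finset.mem_image_of_mem b (Finset.mem_univ j))
    have henew : ∀ j, e ≠ h j := by
      intro j hc
      exact hnot (a j) (haP j) (hc ▸ hah j)
    refine ⟨Fin.snoc h e, Fin.snoc a a', Fin.snoc b b', ?_, ?_, ?_, ?_, ?_, ?_, ?_, ?_, ?_⟩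
    · intro j
      induction j using Fin.lastCases with
      | last => simp only [Fin.snoc_last]; exact heE2
      | cast j => simp only [Fin.snoc_castSucc]; exact hE j
    · intro j
      induction j using Fin.lastCases with
      | last => simp only [Fin.snoc_last]; exact ha'e
      | cast j => simp only [Fin.snoc_castSucc]; exact hah j
    · intro j
      induction j using Fin.lastCases with
      | last => simp only [Fin.snoc_last]; exact hb'e
      | cast j => simp only [Fin.snoc_castSucc]; exact hbh j
    · intro j
      induction j using Fin.lastCases with
      | last => simp only [Fin.snoc_last]; exact ha'B
      | cast j => simp only [Fin.snoc_castSucc]; exact haB j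
    · intro j
      induction j using Fin.lastCases with
      | last => simp only [Fin.snoc_last]; exact hb'B
      | cast j => simp only [Fin.snoc_castSucc]; exact hbB j
    · intro j1 j2 hj
      induction j1 using Fin.lastCases with
      | last =>
        induction j2 using Fin.lastCases with
        | last => rfl
        | cast j2 =>
          simp only [Fin.snoc_last, Fin.snoc_castSucc] at hj
          exact absurd (hj ▸ rfl : e = h j2) (henew j2)
      | cast j1 =>
        induction j2 using Fin.lastCases with
        | last =>
          simp only [Fin.snoc_last, Fin.snoc_castSucc] at hj
          exact absurd (hj ▸ rfl : h j1 = e).symm (henew j1)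
        | cast j2 =>
          simp only [Fin.snoc_castSucc] at hj
          rw [hinj hj]
    · intro j1 j2 hj
      induction j1 using Fin.lastCases with
      | last =>
        induction j2 using Fin.lastCases with
        | last => rfl
        | cast j2 =>
          simp only [Fin.snoc_last, Fin.snoc_castSucc] at hj
          exact absurd (haP j2) (hj ▸ ha'P)
      | cast j1 =>
        induction j2 using Fin.lastCases with
        | last =>
          simp only [Fin.snoc_last, Fin.snoc_castSucc] at hj
          exact absurd (haP j1) (hj.symm ▸ ha'P)
        | cast j2 =>
          simp only [Fin.snoc_castSucc] at hj
          rw [ainj hj]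
    · intro j1 j2 hj
      induction j1 using Fin.lastCases with
      | last =>
        induction j2 using Fin.lastCases with
        | last => rfl
        | cast j2 =>
          simp only [Fin.snoc_last, Fin.snoc_castSucc] at hj
          exact absurd (hbP j2) (hj ▸ hb'P)
      | cast j1 =>
        induction j2 using Fin.lastCases with
        | last =>
          simp only [Fin.snoc_last, Fin.snoc_castSucc] at hj
          exact absurd (hbP j1) (hj.symm ▸ hb'P)
        | cast j2 =>
          simp only [Fin.snoc_castSucc] at hj
          rw [binj hj]
    · intro j j'
      induction j using Fin.lastCases with
      | last =>
        induction j' using Fin.lastCases with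
        | last => simp only [Fin.snoc_last]; exact hane
        | cast j' =>
          simp only [Fin.snoc_last, Fin.snoc_castSucc]
          intro hc
          exact absurd (hbP j') (hc ▸ ha'P)
      | cast j =>
        induction j' using Fin.lastCases with
        | last =>
          simp only [Fin.snoc_last, Fin.snoc_castSucc]
          intro hc
          exact absurd (haP j) (hc.symm ▸ hb'P)
        | cast j' =>
          simp only [Fin.snoc_castSucc]
          exact hab j j'

lemma lower_bound (s r p q n : ℕ) (hp : 1 ≤ p) (hpq : p ≤ q)
    (hrpq : r = p + q) (hn : s ≤ n) :
    min (p - 1) (exr s (r - 1) (fun L =>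
        ¬ ContainsCopy Finset.univ (completeBipartite p q) (twoShadow L))) * (n - s) ≤
      exr n r (fun H => ¬ ContainsBerge (matchingHG (s + 1)) H ∧
        ¬ ContainsBerge (completeBipartite p q) H) := by
  classical
  have hq : 1 ≤ q := le_trans hp hpq
  have hr1 : 1 ≤ r := by omega
  set g := exr s (r - 1) (fun L =>
      ¬ ContainsCopy Finset.univ (completeBipartite p q) (twoShadow L)) with hgdef
  set m := min (p - 1) g with hm
  obtain ⟨G₀, hGu, hGfree, hGcard⟩ := exr_attained (n := s) (r := r - 1)
    (P := fun L => ¬ ContainsCopy Finset.univ (completeBipartite p q) (twoShadow L))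
    (by exact not_containsCopy_cb_empty hp hq)
  have hmG : m ≤ G₀.card := by rw [hGcard, ← hgdef]; exact min_le_right _ _
  obtain ⟨G', hG'sub, hG'card⟩ := Finset.exists_subset_card_eq hmG
  set emb : Fin s → Fin n := fun x => ⟨x.val, lt_of_lt_of_le x.isLt hn⟩ with hembdef
  have embinj : Function.Injective emb := by
    intro x y hxy
    have h := congrArg Fin.val hxy
    exact Fin.ext h
  set S : Finset (Fin n) := Finset.univ.image emb with hSdef
  have hScard : S.card = s := by
    rw [hSdef, Finset.card_image_of_injective _ embinj]; simp
  have himgS : ∀ f : Finset (Fin s), f.image emb ⊆ S := by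
    intro f x hx
    obtain ⟨z, -, rfl⟩ := Finset.mem_image.1 hx
    exact Finset.mem_image_of_mem emb (Finset.mem_univ z)
  set Hs : Finset (Finset (Fin n)) := ((Finset.univ \ S) ×ˢ G').image
    (fun vf : Fin n × Finset (Fin s) => insert vf.1 (vf.2.image emb)) with hHsdef
  have hshape : ∀ e ∈ Hs, ∃ v f, v ∉ S ∧ f ∈ G' ∧ e = insert v (f.image emb) := by
    intro e he
    obtain ⟨⟨v, f⟩, hmem, rfl⟩ := Finset.mem_image.1 he
    rw [Finset.mem_product, Finset.mem_sdiff] at hmem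
    exact ⟨v, f, hmem.1.2, hmem.2, rfl⟩
  have hfcard : ∀ f ∈ G', f.card = r - 1 := fun f hf => hGu f (hG'sub hf)
  have hHu : IsUniform r Hs := by
    intro e he
    obtain ⟨v, f, hvS, hfG, rfl⟩ := hshape e he
    rw [Finset.card_insert_of_notMem (fun hc => hvS (himgS f hc)),
      Finset.card_image_of_injective _ embinj, hfcard f hfG]
    omega
  have hHscard : Hs.card = (n - s) * m := by
    rw [hHsdef]
    rw [Finset.card_image_of_injOn]
    · rw [Finset.card_product, Finset.card_sdiff_of_subset (Finset.subset_univ S), hScard,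
        Finset.card_univ, Fintype.card_fin, hG'card]
    · rintro ⟨v, f⟩ hvf ⟨v', f'⟩ hvf' heq
      simp only [Finset.mem_coe, Finset.mem_product, Finset.mem_sdiff] at hvf hvf'
      simp only at heq
      have hvv : v = v' := by
        have hv : v ∈ insert v' (f'.image emb) := heq ▸ Finset.mem_insert_self v _
        rcases Finset.mem_insert.1 hv with h | h
        · exact h
        · exact absurd (himgS f' h) hvf.1.2
      subst hvv
      have hff : f.image emb = f'.image emb := by
        have h1 := Finset.erase_insert (fun hc => hvf.1.2 (himgS f hc))
        have h2 := Finset.erase_insert (fun hc => hvf'.1.2 (himgS f' hc))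
        rw [← h1, ← h2, heq]
      rw [Prod.mk.injEq]
      exact ⟨rfl, Finset.image_injective embinj hff⟩
  have freeM : ¬ ContainsBerge (matchingHG (s + 1)) Hs := by
    intro hcb
    obtain ⟨h, c, hinj, cinj, hH, hc⟩ := berge_matching_elim hcb
    have hSmem : ∀ i : Fin (s + 1), (if c (i, 0) ∈ S then c (i, 0) else c (i, 1)) ∈ S := by
      intro i
      by_cases h0 : c (i, 0) ∈ S
      · rw [if_pos h0]; exact h0
      · rw [if_neg h0]
        obtain ⟨v, f, hvS, hfG, hsh⟩ := hshape _ (hH i)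
        have h0' : c (i, 0) = v := by
          have := hc i 0
          rw [hsh] at this
          rcases Finset.mem_insert.1 this with h | h
          · exact h
          · exact absurd (himgS f h) h0
        have h1 := hc i 1
        rw [hsh] at h1
        rcases Finset.mem_insert.1 h1 with h | h
        · exfalso
          have : c (i, 0) = c (i, 1) := by rw [h0', h]
          have := cinj this
          simp at this
        · exact himgS f h
    set cs : Fin (s + 1) → Fin n := fun i => if c (i, 0) ∈ S then c (i, 0) else c (i, 1)
      with hcs
    have csinj : Function.Injective cs := by
      intro i j hij
      rw [hcs] at hij
      simp only at hij
      by_cases hi : c (i, 0) ∈ S <;> by_cases hj : c (j, 0) ∈ S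
      · rw [if_pos hi, if_pos hj] at hij
        exact (Prod.mk.injEq .. ▸ (cinj hij)).1
      · rw [if_pos hi, if_neg hj] at hij
        exact (Prod.mk.injEq .. ▸ (cinj hij)).1
      · rw [if_neg hi, if_pos hj] at hij
        exact (Prod.mk.injEq .. ▸ (cinj hij)).1
      · rw [if_neg hi, if_neg hj] at hij
        exact (Prod.mk.injEq .. ▸ (cinj hij)).1
    have : s + 1 ≤ s := by
      calc s + 1 = (Finset.univ.image cs).card := by
            rw [Finset.card_image_of_injective _ csinj]; simp
        _ ≤ S.card := Finset.card_le_card (by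
            intro x hx
            obtain ⟨i, -, rfl⟩ := Finset.mem_image.1 hx
            exact hSmem i)
        _ = s := hScard
    omega
  have freeK : ¬ ContainsBerge (completeBipartite p q) Hs := by
    intro hcb
    obtain ⟨x, y, T, hxy, hT, hTH, hxT, hyT⟩ := berge_cb_elim hcb
    have hTsh : ∀ i j, ∃ v f, v ∉ S ∧ f ∈ G' ∧ T i j = insert v (f.image emb) :=
      fun i j => hshape _ (hTH i j)
    choose v f hvS hfG hsh using hTsh
    by_cases hx : ∀ i, x i ∈ S
    · by_cases hy : ∀ j, y j ∈ S
      · -- Case C: build copy in twoShadow G₀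
        have hxe : ∀ i, ∃ z : Fin s, emb z = x i := by
          intro i
          obtain ⟨z, -, hz⟩ := Finset.mem_image.1 (hx i)
          exact ⟨z, hz⟩
        have hye : ∀ j, ∃ z : Fin s, emb z = y j := by
          intro j
          obtain ⟨z, -, hz⟩ := Finset.mem_image.1 (hy j)
          exact ⟨z, hz⟩
        choose xs hxs using hxe
        choose ys hys using hye
        apply hGfree
        apply copy_cb_shadow_intro xs ys
        · have hcomp : emb ∘ (Sum.elim xs ys) = Sum.elim x y := by
            funext a
            cases a with
            | inl i => simp [hxs]
            | inr j => simp [hys]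
          have : Function.Injective (emb ∘ (Sum.elim xs ys)) := hcomp ▸ hxy
          exact Function.Injective.of_comp this
        · intro i j
          refine ⟨f i j, hG'sub (hfG i j), ?_, ?_⟩
          · have hxm := hxT i j
            rw [hsh i j] at hxm
            rcases Finset.mem_insert.1 hxm with h | h
            · exact absurd (h ▸ hx i) (hvS i j)
            · obtain ⟨z, hzf, hz⟩ := Finset.mem_image.1 h
              have : z = xs i := embinj (by rw [hz, hxs])
              exact this ▸ hzf
          · have hym := hyT i j
            rw [hsh i j] at hym
            rcases Finset.mem_insert.1 hym with h | h
            · exact absurd (h ▸ hy j) (hvS i j)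
            · obtain ⟨z, hzf, hz⟩ := Finset.mem_image.1 h
              have : z = ys j := embinj (by rw [hz, hys])
              exact this ▸ hzf
      · -- Case B: some y j₀ outside S
        push_neg at hy
        obtain ⟨j₀, hj₀⟩ := hy
        have hyv : ∀ i, y j₀ = v i j₀ := by
          intro i
          have := hyT i j₀
          rw [hsh i j₀] at this
          rcases Finset.mem_insert.1 this with h | h
          · exact h
          · exact absurd (himgS _ h) hj₀
        have hfinj : Function.Injective (fun i => f i j₀) := by
          intro i i' hii
          simp only at hii
          have : T i j₀ = T i' j₀ := by
            rw [hsh i j₀, hsh i' j₀, ← hyv i, ← hyv i', hii]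
          exact (hT _ _ _ _ this).1
        have : p ≤ m := by
          calc p = (Finset.univ.image (fun i => f i j₀)).card := by
                rw [Finset.card_image_of_injective _ hfinj]; simp
            _ ≤ G'.card := Finset.card_le_card (by
                intro z hz
                obtain ⟨i, -, rfl⟩ := Finset.mem_image.1 hz
                exact hfG i j₀)
            _ = m := hG'card
        have : m ≤ p - 1 := min_le_left _ _
        omega
    · -- Case A: some x i₀ outside S
      push_neg at hx
      obtain ⟨i₀, hi₀⟩ := hx
      have hxv : ∀ j, x i₀ = v i₀ j := by
        intro j
        have := hxT i₀ j
        rw [hsh i₀ j] at this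
        rcases Finset.mem_insert.1 this with h | h
        · exact h
        · exact absurd (himgS _ h) hi₀
      have hfinj : Function.Injective (fun j => f i₀ j) := by
        intro j j' hjj
        simp only at hjj
        have : T i₀ j = T i₀ j' := by
          rw [hsh i₀ j, hsh i₀ j', ← hxv j, ← hxv j', hjj]
        exact (hT _ _ _ _ this).2
      have : q ≤ m := by
        calc q = (Finset.univ.image (fun j => f i₀ j)).card := by
              rw [Finset.card_image_of_injective _ hfinj]; simp
          _ ≤ G'.card := Finset.card_le_card (by
              intro z hz
              obtain ⟨j, -, rfl⟩ := Finset.mem_image.1 hz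
              exact hfG i₀ j)
          _ = m := hG'card
      have : m ≤ p - 1 := min_le_left _ _
      omega
  calc m * (n - s) = Hs.card := by rw [hHscard, Nat.mul_comm]
    _ ≤ exr n r _ := exr_ge Hs hHu ⟨freeM, freeK⟩

lemma upper_bound (s r p q n : ℕ) (hp : 1 ≤ p) (hpq : p ≤ q)
    (hrpq : r = p + q) (hrs : r ≤ s) (hn : s ≤ n)
    (H : Finset (Finset (Fin n))) (hu : IsUniform r H)
    (hM : ¬ ContainsBerge (matchingHG (s + 1)) H)
    (hK : ¬ ContainsBerge (completeBipartite p q) H) :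
    H.card ≤ (min (p - 1) (exr s (r - 1) (fun L =>
        ¬ ContainsCopy Finset.univ (completeBipartite p q) (twoShadow L)))) * n +
      (((p * q + q) * 2 ^ 2 ^ s) * 2 ^ s + 2 ^ s +
        (s + 1) * (2 * ((s + 1) + 2 ^ (2 * (s + 1))))) := by
  classical
  have hq : 1 ≤ q := le_trans hp hpq
  set g := exr s (r - 1) (fun L =>
      ¬ ContainsCopy Finset.univ (completeBipartite p q) (twoShadow L)) with hgdef
  set m := min (p - 1) g with hm
  set D := (s + 1) + 2 ^ (2 * (s + 1)) with hD
  set B : Finset (Fin n) := Finset.univ.filter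
    (fun v => D ≤ (H.filter (fun e => v ∈ e)).card) with hB
  -- Step 1 : B has at most s vertices
  have hBcard : B.card ≤ s := by
    by_contra hlt
    push_neg at hlt
    obtain ⟨U, hUB, hUcard⟩ := Finset.exists_subset_card_eq (hlt : s + 1 ≤ B.card)
    set u : Fin (s + 1) → Fin n := fun i => (U.orderIsoOfFin hUcard i : Fin n) with hudef
    have uinj : Function.Injective u := by
      intro i j hij
      have := Subtype.ext hij
      exact (U.orderIsoOfFin hUcard).injective this
    apply hM
    apply greedy_big_vertices u uinj
    intro i
    have huB : u i ∈ B := hUB (U.orderIsoOfFin hUcard i).2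
    rw [hB, Finset.mem_filter] at huB
    exact huB.2
  -- Step 2 : few edges with at least two vertices outside B
  set E2 := H.filter (fun e => 2 ≤ (e \ B).card) with hE2
  have hE2card : E2.card ≤ (s + 1) * (2 * D) := by
    by_contra hlt
    push_neg at hlt
    apply hM
    apply greedy_pair_edges (Finset.filter_subset _ H)
      (fun e he => (Finset.mem_filter.1 he).2) ?_ hlt
    intro v hv
    rw [hB, Finset.mem_filter] at hv
    push_neg at hv
    exact le_of_lt (hv (Finset.mem_univ v))
  -- the link of a vertex
  set Dv : Fin n → Finset (Finset (Fin n)) := fun v =>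
    (H.filter (fun e => v ∈ e ∧ e \ B = {v})).image (fun e => e.erase v) with hDvdef
  have hDvfact : ∀ v, ∀ f ∈ Dv v,
      f ⊆ B ∧ f.card = r - 1 ∧ v ∉ f ∧ insert v f ∈ H := by
    intro v f hf
    obtain ⟨e, he, rfl⟩ := Finset.mem_image.1 hf
    rw [Finset.mem_filter] at he
    obtain ⟨heH, hve, heB⟩ := he
    refine ⟨?_, ?_, Finset.notMem_erase v e, ?_⟩
    · intro x hx
      rw [Finset.mem_erase] at hx
      by_contra hxB
      have : x ∈ e \ B := Finset.mem_sdiff.2 ⟨hx.2, hxB⟩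
      rw [heB, Finset.mem_singleton] at this
      exact hx.1 this
    · rw [Finset.card_erase_of_mem hve, hu e heH]
    · rw [Finset.insert_erase hve]
      exact heH
  have hDvpow : ∀ v, Dv v ⊆ B.powerset := by
    intro v f hf
    exact Finset.mem_powerset.2 (hDvfact v f hf).1
  have hDvcard : ∀ v, (Dv v).card ≤ 2 ^ s := by
    intro v
    calc (Dv v).card ≤ B.powerset.card := Finset.card_le_card (hDvpow v)
      _ = 2 ^ B.card := Finset.card_powerset B
      _ ≤ 2 ^ s := Nat.pow_le_pow_right (by norm_num) hBcard
  -- bad vertices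
  set Vb := (Finset.univ \ B).filter (fun v => m + 1 ≤ (Dv v).card) with hVb
  have hVbnotB : ∀ v ∈ Vb, v ∉ B := by
    intro v hv
    rw [hVb, Finset.mem_filter, Finset.mem_sdiff] at hv
    exact hv.1.2
  have hppcard : ((B.powerset.powerset : Finset (Finset (Finset (Fin n))))).card ≤ 2 ^ 2 ^ s := by
    rw [Finset.card_powerset, Finset.card_powerset]
    exact Nat.pow_le_pow_right (by norm_num)
      (Nat.pow_le_pow_right (by norm_num) hBcard)
  have hVbcard : Vb.card ≤ (p * q + q) * 2 ^ 2 ^ s := by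
    by_cases hcase : p - 1 ≤ g
    · -- m = p - 1, bad vertices have links of size ≥ p
      have hmp : m + 1 = p := by
        rw [hm, min_eq_left hcase]; omega
      have key : Vb.card ≤ 2 ^ 2 ^ s * q := by
        by_contra hbig
        push_neg at hbig
        set Tsel : Fin n → Finset (Finset (Fin n)) := fun v =>
          if h : p ≤ (Dv v).card then (Finset.exists_subset_card_eq h).choose else ∅
          with hTsel
        have hTselspec : ∀ v ∈ Vb, Tsel v ⊆ Dv v ∧ (Tsel v).card = p := by
          intro v hv
          rw [hVb, Finset.mem_filter] at hv
          have hple : p ≤ (Dv v).card := hmp ▸ hv.2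
          rw [hTsel]
          simp only [dif_pos hple]
          obtain ⟨h1, h2⟩ := (Finset.exists_subset_card_eq hple).choose_spec
          exact ⟨h1, h2⟩
        have hmaps : ∀ v ∈ Vb, Tsel v ∈ B.powerset.powerset := by
          intro v hv
          exact Finset.mem_powerset.2 ((hTselspec v hv).1.trans (hDvpow v))
        obtain ⟨T, -, hTfib⟩ := Finset.exists_le_card_fiber_of_mul_le_card_of_maps_to hmaps
          ⟨∅, Finset.mem_powerset.2 (Finset.empty_subset _)⟩
          (le_trans (Nat.mul_le_mul_right q hppcard) (le_of_lt hbig))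
        set fib := Vb.filter (fun v => Tsel v = T) with hfib
        obtain ⟨Q, hQfib, hQcard⟩ := Finset.exists_subset_card_eq hTfib
        have hQne : Q.Nonempty := by
          rw [← Finset.card_pos, hQcard]; omega
        obtain ⟨v₀, hv₀⟩ := hQne
        have hv₀fib : v₀ ∈ fib := hQfib hv₀
        have hTcard : T.card = p := by
          rw [hfib, Finset.mem_filter] at hv₀fib
          rw [← hv₀fib.2]
          exact (hTselspec v₀ hv₀fib.1).2
        have hTsub : ∀ v ∈ Q, T ⊆ Dv v := by
          intro v hv
          have hvfib := hQfib hv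
          rw [hfib, Finset.mem_filter] at hvfib
          rw [← hvfib.2]
          exact (hTselspec v hvfib.1).1
        -- enumerate T
        set Fv : Fin p → Finset (Fin n) := fun i =>
          (T.equivFin.symm (Fin.cast hTcard.symm i) : Finset (Fin n)) with hFv
        have hFvinj : Function.Injective Fv := by
          intro i j hij
          have h1 := T.equivFin.symm.injective (Subtype.ext hij)
          exact Fin.cast_injective _ h1
        have hFvT : ∀ i, Fv i ∈ T := fun i => (T.equivFin.symm (Fin.cast hTcard.symm i)).2
        -- enumerate Q
        set vv : Fin q → Fin n := fun j => (Q.orderIsoOfFin hQcard j : Fin n) with hvv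
        have hvvinj : Function.Injective vv := by
          intro i j hij
          exact (Q.orderIsoOfFin hQcard).injective (Subtype.ext hij)
        have hvvQ : ∀ j, vv j ∈ Q := fun j => (Q.orderIsoOfFin hQcard j).2
        have hvvVb : ∀ j, vv j ∈ Vb := by
          intro j
          have h1 := hQfib (hvvQ j)
          rw [hfib, Finset.mem_filter] at h1
          exact h1.1
        -- SDR
        have hsdr : ∀ i, p ≤ (Fv i).card := by
          intro i
          have := (hDvfact v₀ (Fv i) (hTsub v₀ hv₀ (hFvT i))).2.1
          omega
        obtain ⟨x, xinj, hxF⟩ := exists_sdr Fv hsdr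
        have hxB : ∀ i, x i ∈ B := fun i =>
          (hDvfact v₀ (Fv i) (hTsub v₀ hv₀ (hFvT i))).1 (hxF i)
        apply hK
        apply berge_cb_intro x vv (fun i j => insert (vv j) (Fv i))
        · intro a b hab
          cases a with
          | inl i => cases b with
            | inl i' => simp only [Sum.elim_inl] at hab; rw [xinj hab]
            | inr j' =>
              simp only [Sum.elim_inl, Sum.elim_inr] at hab
              exact absurd (hab ▸ hxB i) (hVbnotB _ (hvvVb j'))
          | inr j => cases b with
            | inl i' =>
              simp only [Sum.elim_inl, Sum.elim_inr] at hab
              exact absurd (hab.symm ▸ hxB i') (hVbnotB _ (hvvVb j))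
            | inr j' => simp only [Sum.elim_inr] at hab; rw [hvvinj hab]
        · intro i j i' j' hT'
          have hFiB : Fv i ⊆ B := (hDvfact v₀ (Fv i) (hTsub v₀ hv₀ (hFvT i))).1
          have hFi'B : Fv i' ⊆ B := (hDvfact v₀ (Fv i') (hTsub v₀ hv₀ (hFvT i'))).1
          have hvj : vv j = vv j' := by
            have hmem : vv j ∈ insert (vv j') (Fv i') := hT' ▸ Finset.mem_insert_self _ _
            rcases Finset.mem_insert.1 hmem with h | h
            · exact h
            · exact absurd (hFi'B h) (hVbnotB _ (hvvVb j))
          have hj : j = j' := hvvinj hvj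
          subst hj
          have hFi : Fv i = Fv i' := by
            have h1 := Finset.erase_insert (fun hc => hVbnotB _ (hvvVb j) (hFiB hc))
            have h2 := Finset.erase_insert (fun hc => hVbnotB _ (hvvVb j) (hFi'B hc))
            rw [← h1, ← h2, hT', hvj]
          exact ⟨hFvinj hFi, rfl⟩
        · intro i j
          exact (hDvfact (vv j) (Fv i) (hTsub (vv j) (hvvQ j) (hFvT i))).2.2.2
        · intro i j
          exact Finset.mem_insert_of_mem (hxF i)
        · intro i j
          exact Finset.mem_insert_self _ _
      calc Vb.card ≤ 2 ^ 2 ^ s * q := key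
        _ ≤ (p * q + q) * 2 ^ 2 ^ s := by ring_nf; nlinarith
    · -- m = g, bad vertices have links of size ≥ g + 1
      have hmg : m = g := by
        rw [hm, min_eq_right]; omega
      have key : Vb.card ≤ 2 ^ 2 ^ s * (p * q) := by
        by_contra hbig
        push_neg at hbig
        have hmaps : ∀ v ∈ Vb, Dv v ∈ B.powerset.powerset := by
          intro v hv
          exact Finset.mem_powerset.2 (hDvpow v)
        obtain ⟨L, -, hLfib⟩ := Finset.exists_le_card_fiber_of_mul_le_card_of_maps_to hmaps
          ⟨∅, Finset.mem_powerset.2 (Finset.empty_subset _)⟩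
          (le_trans (Nat.mul_le_mul_right (p * q) hppcard) (le_of_lt hbig))
        set fib := Vb.filter (fun v => Dv v = L) with hfib
        obtain ⟨Q, hQfib, hQcard⟩ := Finset.exists_subset_card_eq hLfib
        have hQne : Q.Nonempty := by
          rw [← Finset.card_pos, hQcard]
          exact Nat.mul_pos (by omega) (by omega)
        obtain ⟨v₀, hv₀⟩ := hQne
        have hDvL : ∀ v ∈ Q, Dv v = L := by
          intro v hv
          have := hQfib hv
          rw [hfib, Finset.mem_filter] at this
          exact this.2
        have hVbQ : ∀ v ∈ Q, v ∈ Vb := by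
          intro v hv
          have := hQfib hv
          rw [hfib, Finset.mem_filter] at this
          exact this.1
        have hLcard : g + 1 ≤ L.card := by
          have h1 := hVbQ v₀ hv₀
          rw [hVb, Finset.mem_filter] at h1
          rw [← hDvL v₀ hv₀]
          omega
        have hLfact : ∀ f ∈ L, f ⊆ B ∧ f.card = r - 1 := by
          intro f hf
          have := hDvfact v₀ f ((hDvL v₀ hv₀) ▸ hf)
          exact ⟨this.1, this.2.1⟩
        -- transport L to Fin s
        obtain ⟨B', hBB', hB'card⟩ := Finset.exists_superset_card_eq hBcard (by simpa using hn)
        set uu : Fin s → Fin n := fun i => (B'.orderIsoOfFin hB'card i : Fin n) with huu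
        have uuinj : Function.Injective uu := by
          intro i j hij
          exact (B'.orderIsoOfFin hB'card).injective (Subtype.ext hij)
        have hB'img : ∀ x ∈ B', ∃ z : Fin s, uu z = x := by
          intro x hx
          exact ⟨(B'.orderIsoOfFin hB'card).symm ⟨x, hx⟩, by
            rw [huu]
            simp⟩
        have himgrec : ∀ e : Finset (Fin n), e ⊆ B' →
            (Finset.univ.filter (fun z => uu z ∈ e)).image uu = e := by
          intro e he
          ext y
          constructor
          · intro hy
            obtain ⟨z, hz, rfl⟩ := Finset.mem_image.1 hy
            exact (Finset.mem_filter.1 hz).2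
          · intro hy
            obtain ⟨z, hz⟩ := hB'img y (he hy)
            exact Finset.mem_image.2 ⟨z, Finset.mem_filter.2 ⟨Finset.mem_univ z,
              hz ▸ hy⟩, hz⟩
        set L' : Finset (Finset (Fin s)) := Finset.univ.powerset.filter
          (fun f => f.image uu ∈ L) with hL'
        have hL'mem : ∀ f ∈ L', f.image uu ∈ L := by
          intro f hf
          exact (Finset.mem_filter.1 hf).2
        have hL'u : IsUniform (r - 1) L' := by
          intro f hf
          have h1 := (hLfact _ (hL'mem f hf)).2
          rw [Finset.card_image_of_injective _ uuinj] at h1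
          exact h1
        have hL'card : g + 1 ≤ L'.card := by
          refine le_trans hLcard (Finset.card_le_card_of_injOn
            (fun e => Finset.univ.filter (fun z => uu z ∈ e)) ?_ ?_)
          · intro e he
            simp only [Finset.mem_coe, hL', Finset.mem_filter]
            refine ⟨Finset.mem_powerset.2 (Finset.subset_univ _), ?_⟩
            rw [himgrec e ((hLfact e he).1.trans hBB')]
            exact he
          · intro e he e' he' hee
            have hee' : Finset.univ.filter (fun z => uu z ∈ e) =
                Finset.univ.filter (fun z => uu z ∈ e') := hee
            rw [← himgrec e ((hLfact e (Finset.mem_coe.1 he)).1.trans hBB'),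
              ← himgrec e' ((hLfact e' (Finset.mem_coe.1 he')).1.trans hBB'), hee']
        have hcopy : ContainsCopy Finset.univ (completeBipartite p q) (twoShadow L') := by
          by_contra hfree
          have := exr_ge (n := s) (r := r - 1)
            (P := fun L => ¬ ContainsCopy Finset.univ (completeBipartite p q) (twoShadow L))
            L' hL'u hfree
          rw [← hgdef] at this
          omega
        obtain ⟨z', w', hzw'inj, hfpair⟩ := copy_cb_shadow_elim hcopy
        choose ff hffL' hzff hwff using hfpair
        -- enumerate Q as a p × q grid
        set vv : Fin p × Fin q → Fin n := fun k =>
          (Q.orderIsoOfFin hQcard (finProdFinEquiv k) : Fin n) with hvv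
        have hvvinj : Function.Injective vv := by
          intro k k' hkk
          have := (Q.orderIsoOfFin hQcard).injective (Subtype.ext hkk)
          exact finProdFinEquiv.injective this
        have hvvQ : ∀ k, vv k ∈ Q := fun k => (Q.orderIsoOfFin hQcard (finProdFinEquiv k)).2
        set Fij : Fin p → Fin q → Finset (Fin n) := fun i j => (ff i j).image uu with hFij
        have hFijL : ∀ i j, Fij i j ∈ L := fun i j => hL'mem _ (hffL' i j)
        have hFijB : ∀ i j, Fij i j ⊆ B := fun i j => (hLfact _ (hFijL i j)).1
        apply hK
        apply berge_cb_intro (fun i => uu (z' i)) (fun j => uu (w' j))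
          (fun i j => insert (vv (i, j)) (Fij i j))
        · have hcomp : (Sum.elim (fun i => uu (z' i)) fun j => uu (w' j)) =
              uu ∘ Sum.elim z' w' := by
            funext a; cases a <;> rfl
          rw [hcomp]
          exact uuinj.comp hzw'inj
        · intro i j i' j' hT'
          have hvj : vv (i, j) = vv (i', j') := by
            have hmem : vv (i, j) ∈ insert (vv (i', j')) (Fij i' j') :=
              hT' ▸ Finset.mem_insert_self _ _
            rcases Finset.mem_insert.1 hmem with h | h
            · exact h
            · exact absurd (hFijB i' j' h) (hVbnotB _ (hVbQ _ (hvvQ (i, j))))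
          have := hvvinj hvj
          rw [Prod.mk.injEq] at this
          exact this
        · intro i j
          have hFD : Fij i j ∈ Dv (vv (i, j)) := by
            rw [hDvL _ (hvvQ (i, j))]
            exact hFijL i j
          exact (hDvfact (vv (i, j)) (Fij i j) hFD).2.2.2
        · intro i j
          exact Finset.mem_insert_of_mem (Finset.mem_image_of_mem uu (hzff i j))
        · intro i j
          exact Finset.mem_insert_of_mem (Finset.mem_image_of_mem uu (hwff i j))
      calc Vb.card ≤ 2 ^ 2 ^ s * (p * q) := key
        _ ≤ (p * q + q) * 2 ^ 2 ^ s := by ring_nf; nlinarith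
  -- final count
  have hsplit := Finset.card_filter_add_card_filter_not
    (s := H) (fun e => (e \ B).card = 1)
  have hrest : (H.filter (fun e => ¬ (e \ B).card = 1)).card ≤
      2 ^ s + (s + 1) * (2 * D) := by
    calc (H.filter (fun e => ¬ (e \ B).card = 1)).card ≤ (B.powerset ∪ E2).card := by
          apply Finset.card_le_card
          intro e he
          rw [Finset.mem_filter] at he
          rcases Nat.lt_or_ge (e \ B).card 2 with hc | hc
          · have hc0 : (e \ B).card = 0 := by omega
            apply Finset.mem_union_left
            rw [Finset.mem_powerset]
            exact Finset.sdiff_eq_empty_iff_subset.1 (Finset.card_eq_zero.1 hc0)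
          · exact Finset.mem_union_right _ (Finset.mem_filter.2 ⟨he.1, hc⟩)
      _ ≤ B.powerset.card + E2.card := Finset.card_union_le _ _
      _ ≤ 2 ^ s + (s + 1) * (2 * D) := by
          apply Nat.add_le_add ?_ hE2card
          rw [Finset.card_powerset]
          exact Nat.pow_le_pow_right (by norm_num) hBcard
  have hone : (H.filter (fun e => (e \ B).card = 1)).card ≤
      m * n + Vb.card * 2 ^ s := by
    calc (H.filter (fun e => (e \ B).card = 1)).card
        ≤ ((Finset.univ \ B).biUnion
            (fun v => H.filter (fun e => v ∈ e ∧ e \ B = {v}))).card := by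
          apply Finset.card_le_card
          intro e he
          rw [Finset.mem_filter] at he
          obtain ⟨v, hv⟩ := Finset.card_eq_one.1 he.2
          have hvmem : v ∈ e \ B := hv ▸ Finset.mem_singleton_self v
          rw [Finset.mem_sdiff] at hvmem
          exact Finset.mem_biUnion.2 ⟨v, Finset.mem_sdiff.2 ⟨Finset.mem_univ v, hvmem.2⟩,
            Finset.mem_filter.2 ⟨he.1, hvmem.1, hv⟩⟩
      _ ≤ ∑ v ∈ Finset.univ \ B, (H.filter (fun e => v ∈ e ∧ e \ B = {v})).card :=
          Finset.card_biUnion_le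
      _ = ∑ v ∈ Finset.univ \ B, (Dv v).card := by
          apply Finset.sum_congr rfl
          intro v hv
          rw [hDvdef]
          rw [Finset.card_image_of_injOn]
          intro e he e' he' hee
          simp only [Finset.mem_coe, Finset.mem_filter] at he he'
          have hee' : e.erase v = e'.erase v := hee
          rw [← Finset.insert_erase he.2.1, ← Finset.insert_erase he'.2.1, hee']
      _ ≤ ∑ v ∈ Finset.univ \ B, (m + if v ∈ Vb then 2 ^ s else 0) := by
          apply Finset.sum_le_sum
          intro v hv
          by_cases hvb : v ∈ Vb
          · rw [if_pos hvb]
            exact le_trans (hDvcard v) (by omega)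
          · rw [if_neg hvb]
            have : ¬ m + 1 ≤ (Dv v).card := by
              intro hc
              exact hvb (Finset.mem_filter.2 ⟨hv, hc⟩)
            omega
      _ = (Finset.univ \ B).card * m + ∑ v ∈ Finset.univ \ B, (if v ∈ Vb then 2 ^ s else 0) := by
          rw [Finset.sum_add_distrib, Finset.sum_const, smul_eq_mul]
      _ = (Finset.univ \ B).card * m + Vb.card * 2 ^ s := by
          congr 1
          rw [← Finset.sum_filter]
          have : (Finset.univ \ B).filter (fun v => v ∈ Vb) = Vb := by
            ext v
            rw [Finset.mem_filter]
            constructor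
            · exact fun h => h.2
            · intro h
              refine ⟨?_, h⟩
              rw [hVb, Finset.mem_filter] at h
              exact h.1
          rw [this, Finset.sum_const, smul_eq_mul]
      _ ≤ m * n + Vb.card * 2 ^ s := by
          have h1 : (Finset.univ \ B).card ≤ n := by
            calc (Finset.univ \ B).card ≤ (Finset.univ : Finset (Fin n)).card :=
                  Finset.card_le_card (Finset.sdiff_subset)
              _ = n := by simp
          have h2 : (Finset.univ \ B).card * m ≤ m * n := by
            calc (Finset.univ \ B).card * m = m * (Finset.univ \ B).card := Nat.mul_comm _ _
              _ ≤ m * n := Nat.mul_le_mul_left m h1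
          omega
  calc H.card = (H.filter (fun e => (e \ B).card = 1)).card +
        (H.filter (fun e => ¬ (e \ B).card = 1)).card := hsplit.symm
    _ ≤ (m * n + Vb.card * 2 ^ s) + (2 ^ s + (s + 1) * (2 * D)) :=
        Nat.add_le_add hone hrest
    _ ≤ m * n + (((p * q + q) * 2 ^ 2 ^ s) * 2 ^ s + 2 ^ s + (s + 1) * (2 * D)) := by
        have h2 : Vb.card * 2 ^ s ≤ ((p * q + q) * 2 ^ 2 ^ s) * 2 ^ s :=
          Nat.mul_le_mul_right _ hVbcard
        calc m * n + Vb.card * 2 ^ s + (2 ^ s + (s + 1) * (2 * D))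
            ≤ m * n + ((p * q + q) * 2 ^ 2 ^ s) * 2 ^ s + (2 ^ s + (s + 1) * (2 * D)) := by
              exact Nat.add_le_add (Nat.add_le_add_left h2 _) le_rfl
          _ = m * n + (((p * q + q) * 2 ^ 2 ^ s) * 2 ^ s + 2 ^ s + (s + 1) * (2 * D)) := by
              ring


/-- Theorem: for `1 ≤ p ≤ q`, `r ≥ 3` with `r = p+q ≤ s`,
`ex_r(n, BM_{s+1} ∪ BK_{p,q}) = min{p-1, g(s, r-1, p, q)}·n + O(1)`, where
`g(s, r-1, p, q)` is the maximum number of hyperedges of an `(r-1)`-graph on `s`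
vertices whose `2`-shadow contains no `K_{p,q}`. -/
theorem exr_berge_matching_and_berge_Kpq_ii
    (s r p q : ℕ) (hs : 1 ≤ s) (hr : 3 ≤ r) (hp : 1 ≤ p) (hpq : p ≤ q)
    (hrpq : r = p + q) (hrs : r ≤ s) :
    ∃ K n₀ : ℕ, ∀ n : ℕ, n₀ ≤ n →
      |(exr n r (fun H => ¬ ContainsBerge (matchingHG (s + 1)) H ∧
          ¬ ContainsBerge (completeBipartite p q) H) : ℤ) -
        ((min (p - 1)
            (exr s (r - 1) (fun H =>
              ¬ ContainsCopy Finset.univ (completeBipartite p q) (twoShadow H))) * n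
          : ℕ) : ℤ)| ≤ (K : ℤ) := by
  classical
  have hq : 1 ≤ q := le_trans hp hpq
  set g := exr s (r - 1) (fun L =>
      ¬ ContainsCopy Finset.univ (completeBipartite p q) (twoShadow L)) with hgdef
  set m := min (p - 1) g with hm
  set C : ℕ := ((p * q + q) * 2 ^ 2 ^ s) * 2 ^ s + 2 ^ s +
      (s + 1) * (2 * ((s + 1) + 2 ^ (2 * (s + 1)))) with hC
  refine ⟨m * s + C, s, ?_⟩
  intro n hn
  have hub : exr n r (fun H => ¬ ContainsBerge (matchingHG (s + 1)) H ∧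
      ¬ ContainsBerge (completeBipartite p q) H) ≤ m * n + C := by
    apply exr_le
    · exact ⟨not_containsBerge_empty (matchingHG_nonempty (by omega)),
        not_containsBerge_empty (completeBipartite_nonempty hp hq)⟩
    · intro H hu hfr
      exact upper_bound s r p q n hp hpq hrpq hrs hn H hu hfr.1 hfr.2
  have hlb : m * (n - s) ≤ exr n r (fun H => ¬ ContainsBerge (matchingHG (s + 1)) H ∧
      ¬ ContainsBerge (completeBipartite p q) H) :=
    lower_bound s r p q n hp hpq hrpq hn
  set X := exr n r (fun H => ¬ ContainsBerge (matchingHG (s + 1)) H ∧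
      ¬ ContainsBerge (completeBipartite p q) H) with hX
  rw [abs_le]
  have hcast : ((m * (n - s) : ℕ) : ℤ) = (m : ℤ) * n - m * s := by
    have h1 : ((n - s : ℕ) : ℤ) = (n : ℤ) - s := by
      rw [Int.ofNat_sub hn]
    push_cast [h1]
    ring
  have h2 : (m : ℤ) * n - m * s ≤ (X : ℤ) := by
    rw [← hcast]
    exact_mod_cast hlb
  have h3 : (X : ℤ) ≤ m * n + C := by exact_mod_cast hub
  have h4 : (0 : ℤ) ≤ (m : ℤ) * s := by positivity
  have h5 : (0 : ℤ) ≤ (C : ℤ) := by positivity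
  constructor
  · push_cast
    linarith
  · push_cast
    linarith
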